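/- Let A = ⊕_{g∈Γ} A_g be a Γ-graded unital ℂ-algebra and ω₀ a normalized ℝ-valued 2-cocycle on Γ. Let φ : A^{⊗(n+1)} → ℂ be a multilinear functional that is cyclic, φ(f⁰, …, fⁿ) = (−1)ⁿ φ(fⁿ, f⁰, …, f^{n−1}), and α-invariant, meaning φ(f⁰, …, fⁿ) = 0 whenever f^j ∈ A_{g_j} are homogeneous with g₀g₁⋯gₙ ≠ e. Define the multilinear functional ω₀^{(n)}φ on A^{⊗(n+1)} by ω₀^{(n)}φ(f⁰, …, fⁿ) = ω₀^{(n)}(g₀, …, gₙ)·φ(f⁰, …, fⁿ) for homogeneous f^j ∈ A_{g_j}, extended multilinearly, where ω₀^{(n)}(g₀,…,gₙ) = Σ_{j=1}^{n} ω₀(g₀⋯g_{j−1}, g_j). Then ω₀^{(n)}φ is again cyclic: ω₀^{(n)}φ(f⁰, …, fⁿ) = (−1)ⁿ ω₀^{(n)}φ(fⁿ, f⁰, …, f^{n−1}). -/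

import Mathlib

/-- The cyclic shift `i ↦ i + n` on `Fin (n+1)` (i.e. `i ↦ i - 1 mod n+1`). -/
def cycf (n : ℕ) : Fin (n+1) → Fin (n+1) :=
  fun i => ⟨(i.val + n) % (n + 1), Nat.mod_lt _ (Nat.succ_pos n)⟩

/-- `cycf` as an equivalence. -/
def cyce (n : ℕ) : Equiv.Perm (Fin (n+1)) where
  toFun := cycf n
  invFun := fun i => ⟨(i.val + 1) % (n + 1), Nat.mod_lt _ (Nat.succ_pos n)⟩
  left_inv := by
    intro i
    apply Fin.ext
    show ((i.val + n) % (n+1) + 1) % (n+1) = i.val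
    rw [Nat.mod_add_mod, show i.val + n + 1 = i.val + (n+1) by omega,
      Nat.add_mod_right, Nat.mod_eq_of_lt i.isLt]
  right_inv := by
    intro i
    apply Fin.ext
    show ((i.val + 1) % (n+1) + n) % (n+1) = i.val
    rw [Nat.mod_add_mod, show i.val + 1 + n = i.val + (n+1) by omega,
      Nat.add_mod_right, Nat.mod_eq_of_lt i.isLt]

lemma take_succ_prod {Γ : Type} [Group Γ] (n : ℕ) (g : Fin (n+1) → Γ) (j : ℕ) (hj : j < n+1) :
    ((List.ofFn g).take (j+1)).prod = ((List.ofFn g).take j).prod * g ⟨j, hj⟩ := by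
  rw [List.prod_take_succ _ j (by simpa using hj), List.getElem_ofFn]

lemma take_cyc_prod {Γ : Type} [Group Γ] (n : ℕ) (g : Fin (n+1) → Γ) :
    ∀ j ≤ n, ((List.ofFn (fun i => g (cycf n i))).take (j+1)).prod
      = g ⟨n, n.lt_succ_self⟩ * ((List.ofFn g).take j).prod := by
  intro j hj
  induction j with
  | zero =>
    rw [take_succ_prod n _ 0 (Nat.succ_pos n)]
    simp [cycf, Nat.mod_eq_of_lt (Nat.lt_succ_self n)]
  | succ j ih =>
    rw [take_succ_prod n _ (j+1) (by omega), ih (by omega),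
      take_succ_prod n g j (by omega), mul_assoc]
    have : cycf n ⟨j+1, by omega⟩ = ⟨j, by omega⟩ := by
      apply Fin.ext
      show (j + 1 + n) % (n+1) = j
      rw [show j + 1 + n = j + (n+1) by omega, Nat.add_mod_right,
        Nat.mod_eq_of_lt (by omega)]
    rw [this]

/-- `ω₀^{(n)}(g₀,…,gₙ) = Σ_{j=1}^n ω₀(g₀ g₁ ⋯ g_{j-1}, g_j)`. -/
def omegaN {Γ : Type} [Group Γ] (ω₀ : Γ → Γ → ℝ) (n : ℕ) (g : Fin (n + 1) → Γ) : ℝ :=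
  ∑ j ∈ Finset.Icc 1 n,
    ω₀ (((List.ofFn g).take j).prod) (g ⟨j % (n + 1), Nat.mod_lt j (Nat.succ_pos n)⟩)

lemma omegaN_cyc {Γ : Type} [Group Γ] (ω₀ : Γ → Γ → ℝ)
    (hcoc : ∀ g h k : Γ, ω₀ g h + ω₀ (g * h) k = ω₀ g (h * k) + ω₀ h k)
    (hnorm₁ : ∀ g : Γ, ω₀ g 1 = 0) (hnorm₂ : ∀ g : Γ, ω₀ 1 g = 0)
    (hnorm₃ : ∀ g : Γ, ω₀ g g⁻¹ = 0)
    (n : ℕ) (g : Fin (n+1) → Γ) (hprod : (List.ofFn g).prod = 1) :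
    omegaN ω₀ n (fun i => g (cycf n i)) = omegaN ω₀ n g := by
  set G : ℕ → Γ := fun j => g ⟨j % (n+1), Nat.mod_lt _ (Nat.succ_pos n)⟩ with hG
  set P : ℕ → Γ := fun j => ((List.ofFn g).take j).prod with hP
  have hGlt : ∀ (j : ℕ) (h : j < n+1), G j = g ⟨j, h⟩ := by
    intro j h; simp only [hG]; congr 1; exact Fin.ext (Nat.mod_eq_of_lt h)
  have hPsucc : ∀ j < n+1, P (j+1) = P j * G j := by
    intro j h; rw [hGlt j h]; exact take_succ_prod n g j h
  have hP0 : P 0 = 1 := by simp [hP]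
  have hPN : P (n+1) = 1 := by
    simp only [hP]; rw [List.take_of_length_le (by simp)]; exact hprod
  have hGn : G n = (P n)⁻¹ := by
    have h1 : P n * G n = 1 := by rw [← hPsucc n (by omega)]; exact hPN
    exact (mul_eq_one_iff_inv_eq.mp h1).symm
  have hIcc : ∀ F : ℕ → ℝ, ∑ j ∈ Finset.Icc 1 n, F j = ∑ i ∈ Finset.range n, F (1+i) := by
    intro F; rw [← Finset.Ico_add_one_right_eq_Icc, Finset.sum_Ico_eq_sum_range]; norm_num
  have hL : omegaN ω₀ n (fun i => g (cycf n i)) = ∑ i ∈ Finset.range n, ω₀ (G n * P i) (G i) := by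
    rw [omegaN, hIcc]
    apply Finset.sum_congr rfl
    intro i hi
    have hi' : i < n := Finset.mem_range.mp hi
    rw [show 1 + i = i + 1 by omega]
    rw [take_cyc_prod n g i (by omega)]
    congr 1
    · rw [hGlt n (Nat.lt_succ_self n)]
    · rw [hGlt i (by omega)]
      congr 1
      apply Fin.ext
      show ((i+1) % (n+1) + n) % (n+1) = i
      rw [Nat.mod_eq_of_lt (by omega : i+1 < n+1), show i+1+n = i+(n+1) by omega,
        Nat.add_mod_right, Nat.mod_eq_of_lt (by omega)]
  have hR : omegaN ω₀ n g = ∑ i ∈ Finset.range n, ω₀ (P (i+1)) (G (i+1)) := by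
    rw [omegaN, hIcc]
    apply Finset.sum_congr rfl
    intro i hi
    rw [show 1 + i = i + 1 by omega]
  rw [hL, hR]
  have hend : ω₀ (P n) (G n) = 0 := by rw [hGn]; exact hnorm₃ _
  have hstart : ω₀ (P 0) (G 0) = 0 := by rw [hP0]; exact hnorm₂ _
  have hend2 : ω₀ (G n) (P n) = 0 := by
    rw [hGn]; have := hnorm₃ (P n)⁻¹; rwa [inv_inv] at this
  have hstart2 : ω₀ (G n) (P 0) = 0 := by rw [hP0]; exact hnorm₁ _
  have hterm : ∀ i ∈ Finset.range n, ω₀ (G n * P i) (G i)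
      = ω₀ (P i) (G i) + (ω₀ (G n) (P (i+1)) - ω₀ (G n) (P i)) := by
    intro i hi
    have hi' : i < n := Finset.mem_range.mp hi
    have hc := hcoc (G n) (P i) (G i)
    rw [← hPsucc i (by omega)] at hc
    linarith
  rw [Finset.sum_congr rfl hterm, Finset.sum_add_distrib,
    Finset.sum_range_sub (fun i => ω₀ (G n) (P i)), hend2, hstart2]
  have hsh : ∑ i ∈ Finset.range n, ω₀ (P (i+1)) (G (i+1))
      = ∑ i ∈ Finset.range n, ω₀ (P i) (G i) + ω₀ (P n) (G n) - ω₀ (P 0) (G 0) := by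
    have h1 := Finset.sum_range_succ' (fun i => ω₀ (P i) (G i)) n
    have h2 := Finset.sum_range_succ (fun i => ω₀ (P i) (G i)) n
    linarith
  rw [hsh, hend, hstart]
  ring

/-- let `A = ⊕_{g∈Γ} A_g` be a Γ-graded unital ℂ-algebra, `ω₀` a normalized
ℝ-valued 2-cocycle, and `φ` a cyclic, α-invariant multilinear functional on `A^{⊗(n+1)}`.
Then the multilinear functional `ψ = ω₀^{(n)}φ`, determined on homogeneous tuples by
`ψ(f⁰,…,fⁿ) = ω₀^{(n)}(g₀,…,gₙ)·φ(f⁰,…,fⁿ)`, is again cyclic. -/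
theorem stmt_15 (Γ : Type) [Group Γ] [DecidableEq Γ]
    (A : Type) [Ring A] [Algebra ℂ A]
    (𝒜 : Γ → Submodule ℂ A)
    (hinternal : DirectSum.IsInternal 𝒜)
    (hone : (1 : A) ∈ 𝒜 (1 : Γ))
    (hmul : ∀ (g h : Γ) (x y : A), x ∈ 𝒜 g → y ∈ 𝒜 h → x * y ∈ 𝒜 (g * h))
    (ω₀ : Γ → Γ → ℝ)
    (hcoc : ∀ g h k : Γ, ω₀ g h + ω₀ (g * h) k = ω₀ g (h * k) + ω₀ h k)
    (hnorm₁ : ∀ g : Γ, ω₀ g 1 = 0) (hnorm₂ : ∀ g : Γ, ω₀ 1 g = 0)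
    (hnorm₃ : ∀ g : Γ, ω₀ g g⁻¹ = 0)
    (n : ℕ)
    (φ ψ : MultilinearMap ℂ (fun _ : Fin (n + 1) => A) ℂ)
    (hcyclic : ∀ f : Fin (n + 1) → A,
      φ f = (-1 : ℂ) ^ n *
        φ (fun i => f ⟨(i.val + n) % (n + 1), Nat.mod_lt _ (Nat.succ_pos n)⟩))
    (hinvariant : ∀ (g : Fin (n + 1) → Γ) (f : Fin (n + 1) → A),
      (∀ i, f i ∈ 𝒜 (g i)) → (List.ofFn g).prod ≠ 1 → φ f = 0)
    (hψ : ∀ (g : Fin (n + 1) → Γ) (f : Fin (n + 1) → A),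
      (∀ i, f i ∈ 𝒜 (g i)) → ψ f = (omegaN ω₀ n g : ℂ) * φ f) :
    ∀ f : Fin (n + 1) → A,
      ψ f = (-1 : ℂ) ^ n *
        ψ (fun i => f ⟨(i.val + n) % (n + 1), Nat.mod_lt _ (Nat.succ_pos n)⟩) := by
  classical
  have hdec : ∀ x : A, ∃ (s : Finset Γ) (a : Γ → A),
      (∀ g, a g ∈ 𝒜 g) ∧ x = ∑ g ∈ s, a g := by
    intro x
    obtain ⟨d, hd⟩ := hinternal.surjective x
    refine ⟨d.support, fun g => ((d g : A)), fun g => (d g).2, ?_⟩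
    rw [← hd, DirectSum.coeAddMonoidHom_eq_dfinsuppSum]
    rfl
  have key : ∀ (g : Fin (n + 1) → Γ) (f : Fin (n + 1) → A), (∀ i, f i ∈ 𝒜 (g i)) →
      ψ f = (-1 : ℂ) ^ n * ψ (fun i => f (cycf n i)) := by
    intro g f hf
    rw [hψ g f hf, hψ (fun i => g (cycf n i)) (fun i => f (cycf n i)) (fun i => hf (cycf n i))]
    by_cases hp : (List.ofFn g).prod = 1
    · rw [omegaN_cyc ω₀ hcoc hnorm₁ hnorm₂ hnorm₃ n g hp, hcyclic f]
      simp only [cycf]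
      ring
    · have hfull : (List.ofFn g).prod
          = ((List.ofFn g).take n).prod * g ⟨n, n.lt_succ_self⟩ := by
        conv_lhs => rw [← List.take_of_length_le (show (List.ofFn g).length ≤ n+1 by simp)]
        exact take_succ_prod n g n (Nat.lt_succ_self n)
      have hcycp : (List.ofFn (fun i => g (cycf n i))).prod
          = g ⟨n, n.lt_succ_self⟩ * ((List.ofFn g).take n).prod := by
        conv_lhs => rw [← List.take_of_length_le
          (show (List.ofFn (fun i => g (cycf n i))).length ≤ n+1 by simp)]
        exact take_cyc_prod n g n le_rfl
      have h2 : (List.ofFn (fun i => g (cycf n i))).prod ≠ 1 := by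
        intro h1
        apply hp
        rw [hcycp] at h1
        have h3 := mul_eq_one_iff_eq_inv.mp h1
        rw [hfull, h3]
        simp
      rw [hinvariant g f hf hp, hinvariant _ _ (fun i => hf (cycf n i)) h2]
      ring
  intro f
  show ψ f = (-1 : ℂ) ^ n * ψ (fun i => f (cycf n i))
  choose s a ha hf using fun i => hdec (f i)
  have e1 : ψ f = ∑ r ∈ Fintype.piFinset s, ψ (fun i => a i (r i)) := by
    conv_lhs => rw [show f = fun i => ∑ g ∈ s i, a i g from funext hf]
    exact ψ.map_sum_finset _ _
  have e2 : ψ (fun i => f (cycf n i))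
      = ∑ r ∈ Fintype.piFinset (fun i => s (cycf n i)), ψ (fun i => a (cycf n i) (r i)) := by
    have h3 : (fun i => f (cycf n i)) = fun i => ∑ g ∈ s (cycf n i), a (cycf n i) g :=
      funext (fun i => hf (cycf n i))
    rw [h3]
    exact ψ.map_sum_finset _ _
  have e3 : ∑ q ∈ Fintype.piFinset s, ψ (fun i => a (cycf n i) (q (cycf n i)))
      = ∑ r ∈ Fintype.piFinset (fun i => s (cycf n i)), ψ (fun i => a (cycf n i) (r i)) := by
    refine Finset.sum_nbij' (fun q => fun i => q (cycf n i))
      (fun r => fun i => r ((cyce n).symm i)) ?_ ?_ ?_ ?_ ?_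
    · intro q hq
      rw [Fintype.mem_piFinset] at hq ⊢
      intro i; exact hq _
    · intro r hr
      rw [Fintype.mem_piFinset] at hr ⊢
      intro i
      have h4 := hr ((cyce n).symm i)
      have h5 : cycf n ((cyce n).symm i) = i := (cyce n).apply_symm_apply i
      rwa [h5] at h4
    · intro q hq
      funext x
      have h5 : cycf n ((cyce n).symm x) = x := (cyce n).apply_symm_apply x
      simp only [h5]
    · intro r hr
      funext x
      have h5 : (cyce n).symm (cycf n x) = x := (cyce n).symm_apply_apply x
      simp only [h5]
    · intro q hq
      rfl
  calc ψ f = ∑ q ∈ Fintype.piFinset s, ψ (fun i => a i (q i)) := e1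
    _ = ∑ q ∈ Fintype.piFinset s, (-1 : ℂ) ^ n * ψ (fun i => a (cycf n i) (q (cycf n i))) := by
        refine Finset.sum_congr rfl fun q hq => ?_
        exact key q (fun i => a i (q i)) (fun i => ha i (q i))
    _ = (-1 : ℂ) ^ n * ∑ q ∈ Fintype.piFinset s, ψ (fun i => a (cycf n i) (q (cycf n i))) :=
        (Finset.mul_sum _ _ _).symm
    _ = (-1 : ℂ) ^ n * ψ (fun i => f (cycf n i)) := by rw [e3, ← e2]
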